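/- Let C = k[z,w]/(z²+z³+w²) and let C' = k[t] be a C-module via the k-algebra homomorphism α: C → k[t] with α(z) = −t²−1, α(w) = −t³−t. The kernel of the surjective C-linear map C² → C' given by (a,b) ↦ α(a) − α(b)·t is isomorphic to C' as a C-module; hence there is a short exact sequence of C-modules 0 → C' → C² → C' → 0. -/

import Mathlib

set_option synthInstance.maxHeartbeats 1000000
set_option maxHeartbeats 1000000

noncomputable section

/-- The polynomial `z² + z³ + w²` in `k[z,w]`, where `z = X 0` and `w = X 1`. -/
abbrev pC (k : Type*) [Field k] : MvPolynomial (Fin 2) k :=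
  MvPolynomial.X 0 ^ 2 + MvPolynomial.X 0 ^ 3 + MvPolynomial.X 1 ^ 2

/-- `C = k[z,w]/(z²+z³+w²)`, the coordinate ring of a nodal affine cubic. -/
abbrev C (k : Type*) [Field k] : Type _ :=
  MvPolynomial (Fin 2) k ⧸ Ideal.span {pC k}

/-- The `k`-algebra map `k[z,w] → k[t]` with `z ↦ −t²−1`, `w ↦ −t³−t`. -/
def fC (k : Type*) [Field k] : MvPolynomial (Fin 2) k →ₐ[k] Polynomial k :=
  MvPolynomial.aeval ![-(Polynomial.X ^ 2) - 1, -(Polynomial.X ^ 3) - Polynomial.X]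

lemma fC_pC (k : Type*) [Field k] : fC k (pC k) = 0 := by
  simp [fC, pC]
  ring

/-- The induced `k`-algebra map `α : C → k[t]` (normalization of the nodal cubic). -/
def αC (k : Type*) [Field k] : C k →ₐ[k] Polynomial k :=
  Ideal.Quotient.liftₐ (Ideal.span {pC k}) (fC k) (by
    intro a ha
    have h : Ideal.span {pC k} ≤ RingHom.ker (fC k).toRingHom := by
      rw [Ideal.span_le, Set.singleton_subset_iff, SetLike.mem_coe, RingHom.mem_ker]
      exact fC_pC k
    exact RingHom.mem_ker.mp (h ha))

/-- `C' = k[t]` as a `C`-module via `α`. -/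
instance algC (k : Type*) [Field k] : Algebra (C k) (Polynomial k) :=
  (αC k).toRingHom.toAlgebra

/-- The `C`-linear map `C² → C' = k[t]`, `(a,b) ↦ α(a) − α(b)·t`. -/
def gC (k : Type*) [Field k] : (C k × C k) →ₗ[C k] Polynomial k :=
  (Algebra.linearMap (C k) (Polynomial k)).comp (LinearMap.fst _ _ _) -
    (LinearMap.mulRight (C k) (Polynomial.X : Polynomial k)).comp
      ((Algebra.linearMap (C k) (Polynomial k)).comp (LinearMap.snd _ _ _))
open Polynomial in
lemma eval_fC {k : Type*} [Field k] (q : MvPolynomial (Fin 2) k) (s : k) :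
    (fC k q).eval s = MvPolynomial.eval ![-s^2-1, -s^3-s] q := by
  induction q using MvPolynomial.induction_on with
  | C a => simp [fC]
  | add p q hp hq => simp [hp, hq]
  | mul_X p n hp =>
      have hx : (fC k (MvPolynomial.X n)).eval s
          = MvPolynomial.eval ![-s^2-1, -s^3-s] (MvPolynomial.X n) := by
        fin_cases n <;> simp [fC]
      rw [map_mul, Polynomial.eval_mul, hp, map_mul, hx]
open Polynomial in
lemma div_lemma {k : Type*} [Field k] (q : MvPolynomial (Fin 2) k) :
    ∃ s : MvPolynomial (Fin 2) k, ∃ r₀ r₁ : Polynomial k,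
      q = pC k * s + Polynomial.aeval (MvPolynomial.X 0) r₁ * MvPolynomial.X 1
        + Polynomial.aeval (MvPolynomial.X 0) r₀ := by
  induction q using MvPolynomial.induction_on with
  | C a =>
      exact ⟨0, Polynomial.C a, 0, by simp [MvPolynomial.algebraMap_eq]⟩
  | add p q hp hq =>
      obtain ⟨s, r₀, r₁, h⟩ := hp
      obtain ⟨s', r₀', r₁', h'⟩ := hq
      refine ⟨s + s', r₀ + r₀', r₁ + r₁', ?_⟩
      rw [h, h', map_add, map_add]; ring
  | mul_X p n hp =>
      obtain ⟨s, r₀, r₁, h⟩ := hp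
      fin_cases n
      · refine ⟨s * MvPolynomial.X 0, r₀ * Polynomial.X, r₁ * Polynomial.X, ?_⟩
        rw [h]
        simp only [Fin.zero_eta, Fin.isValue, map_mul, Polynomial.aeval_X]
        ring
      · refine ⟨s * MvPolynomial.X 1 + Polynomial.aeval (MvPolynomial.X 0) r₁,
          -(Polynomial.X^2 + Polynomial.X^3) * r₁, r₀, ?_⟩
        rw [h]
        simp only [Fin.mk_one, Fin.isValue, map_neg, map_add, map_pow, map_mul,
          Polynomial.aeval_X, pC]
        ring
open Polynomial in
lemma comp_eval_zero {k : Type*} [Field k] [IsAlgClosed k] [CharZero k] (r : Polynomial k)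
    (h : ∀ s : k, r.eval (-s^2-1) = 0) : r = 0 := by
  apply Polynomial.funext (q := 0)
  intro v
  obtain ⟨s, hs⟩ := IsAlgClosed.exists_pow_nat_eq (-1-v) (n := 2) (by norm_num)
  have hv : -s^2-1 = v := by rw [hs]; ring
  simp [← hv, h s]

lemma αC_mk {k : Type*} [Field k] (q : MvPolynomial (Fin 2) k) :
    αC k (Ideal.Quotient.mk _ q) = fC k q := rfl

open Polynomial in
lemma ker_fC {k : Type*} [Field k] [IsAlgClosed k] [CharZero k]
    (q : MvPolynomial (Fin 2) k) (h : fC k q = 0) : q ∈ Ideal.span {pC k} := by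
  obtain ⟨s, r₀, r₁, hd⟩ := div_lemma q
  have hfC0 : fC k (MvPolynomial.X 0) = -X^2-1 := by simp [fC]
  have hfC1 : fC k (MvPolynomial.X 1) = -X^3-X := by simp [fC]
  have key : aeval (-X^2-1 : k[X]) r₁ * (-X^3-X) + aeval (-X^2-1 : k[X]) r₀ = 0 := by
    have := congrArg (fC k) hd
    rw [h, map_add, map_add, map_mul, map_mul, fC_pC, zero_mul, zero_add,
      ← Polynomial.aeval_algHom_apply, ← Polynomial.aeval_algHom_apply, hfC0, hfC1] at this
    exact this.symm
  have keyev : ∀ t : k, r₁.eval (-t^2-1) * (-t^3-t) + r₀.eval (-t^2-1) = 0 := by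
    intro t
    have := congrArg (Polynomial.eval t) key
    rw [eval_add, eval_mul, ← comp_eq_aeval, ← comp_eq_aeval, eval_comp, eval_comp] at this
    simpa using this
  have hA : ∀ t : k, r₁.eval (-t^2-1) * (t^3+t) = 0 := by
    intro t
    have h1 := keyev t
    have h2 := keyev (-t)
    have e1 : -(-t)^2-1 = -t^2-1 := by ring
    have e2 : -(-t)^3-(-t) = t^3+t := by ring
    rw [e1, e2] at h2
    linear_combination (h2 - h1)/2
  have hB : ∀ t : k, r₀.eval (-t^2-1) = 0 := by
    intro t
    have h1 := keyev t
    have h2 := hA t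
    linear_combination h1 + h2
  have hr₀ : r₀ = 0 := comp_eval_zero r₀ hB
  have hr₁ : r₁ = 0 := by
    have hprod : r₁.comp (-X^2-1) * (X^3+X) = 0 := by
      apply Polynomial.funext (q := 0)
      intro t
      simpa [eval_comp] using hA t
    have hx3 : (X^3+X : k[X]) ≠ 0 := fun hcon =>
      by simpa [Polynomial.coeff_X] using congrArg (fun p => Polynomial.coeff p 3) hcon
    have hcomp : r₁.comp (-X^2-1) = 0 := by
      rcases mul_eq_zero.mp hprod with h' | h'
      · exact h'
      · exact absurd h' hx3
    apply comp_eval_zero r₁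
    intro t
    have := congrArg (Polynomial.eval t) hcomp
    rw [eval_comp] at this
    simpa using this
  rw [hr₀, hr₁] at hd
  simp only [map_zero, zero_mul, add_zero] at hd
  exact Ideal.mem_span_singleton.mpr ⟨s, hd⟩

lemma αC_inj {k : Type*} [Field k] [IsAlgClosed k] [CharZero k] :
    Function.Injective (αC k) := by
  rw [injective_iff_map_eq_zero]
  intro a ha
  obtain ⟨q, rfl⟩ := Ideal.Quotient.mk_surjective a
  rw [αC_mk] at ha
  exact Ideal.Quotient.eq_zero_iff_mem.mpr (ker_fC q ha)
open Polynomial in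
lemma X2_mem {k : Type*} [Field k] : ((X:k[X])^2+1) ∈ (αC k).range :=
  ⟨Ideal.Quotient.mk _ (-(MvPolynomial.X 0)), by
    show fC k (-(MvPolynomial.X 0)) = _
    simp [fC]; ring⟩

open Polynomial in
lemma X3_mem {k : Type*} [Field k] : ((X:k[X])^3+X) ∈ (αC k).range :=
  ⟨Ideal.Quotient.mk _ (-(MvPolynomial.X 1)), by
    show fC k (-(MvPolynomial.X 1)) = _
    simp [fC]; ring⟩

open Polynomial in
lemma pow_mem' {k : Type*} [Field k] (n : ℕ) :
    ((X:k[X])^2+1) * X^n ∈ (αC k).range := by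
  induction n using Nat.strong_induction_on with
  | _ n ih =>
    match n with
    | 0 => simpa using X2_mem
    | 1 =>
      have he : ((X:k[X])^2+1) * X^1 = X^3+X := by ring
      rw [he]; exact X3_mem
    | (m+2) =>
      have h1 := ih m (by omega)
      have he : ((X:k[X])^2+1) * X^(m+2)
          = ((X^2+1) * X^m) * (X^2+1) - ((X^2+1) * X^m) := by ring
      rw [he]
      exact sub_mem (mul_mem h1 X2_mem) h1

open Polynomial in
lemma mul_mem_range {k : Type*} [Field k] (h : Polynomial k) :
    ((X:k[X])^2+1) * h ∈ (αC k).range := by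
  induction h using Polynomial.induction_on' with
  | add p q hp hq => rw [mul_add]; exact add_mem hp hq
  | monomial n a =>
      rw [← Polynomial.C_mul_X_pow_eq_monomial, show ((X:k[X])^2+1) * (Polynomial.C a * X^n)
        = Polynomial.C a * (((X:k[X])^2+1) * X^n) by ring]
      exact mul_mem (by rw [← Polynomial.algebraMap_eq]; exact Subalgebra.algebraMap_mem _ a)
        (pow_mem' n)

open Polynomial in
lemma gC_apply {k : Type*} [Field k] (a b : C k) :
    gC k (a, b) = αC k a - αC k b * X := rfl

open Polynomial in
lemma smul_def' {k : Type*} [Field k] (c : C k) (f : Polynomial k) :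
    c • f = αC k c * f := rfl
open Polynomial in
lemma X2_monic {k : Type*} [Field k] : ((X:k[X])^2+1).Monic := by
  apply Polynomial.monic_X_pow_add
  have : ((1:k[X])).degree ≤ 0 := Polynomial.degree_one_le
  exact lt_of_le_of_lt this (by norm_num)

open Polynomial in
lemma X2_ne_zero {k : Type*} [Field k] : ((X:k[X])^2+1) ≠ 0 := X2_monic.ne_zero

open Polynomial in
lemma gC_surj {k : Type*} [Field k] : Function.Surjective (gC k) := by
  intro f
  obtain ⟨a₂, ha₂⟩ := mul_mem_range (f /ₘ ((X:k[X])^2+1))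
  set r := f %ₘ ((X:k[X])^2+1) with hrdef
  have hdeg2 : ((X:k[X])^2+1).degree = 2 := by
    have := Polynomial.degree_X_pow_add_C (n := 2) (by norm_num) (1:k)
    simpa using this
  have hdeg : r.degree < 2 := by
    rw [← hdeg2]; exact Polynomial.degree_modByMonic_lt f X2_monic
  have h0 : r ≠ 0 ∨ r = 0 := (em _).symm
  have hnd : r.natDegree ≤ 1 := by
    rcases h0 with h0 | h0
    · have := (Polynomial.natDegree_lt_iff_degree_lt h0).mpr
        (by exact_mod_cast hdeg : r.degree < ((2:ℕ) : WithBot ℕ))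
      omega
    · simp [h0]
  obtain ⟨c1, c0, hr⟩ := Polynomial.exists_eq_X_add_C_of_natDegree_le_one hnd
  have ha₂' : αC k a₂ = ((X:k[X])^2+1) * (f /ₘ ((X:k[X])^2+1)) := ha₂
  refine ⟨(a₂ + algebraMap k (C k) c0, -(algebraMap k (C k) c1)), ?_⟩
  rw [gC_apply, map_add, map_neg, AlgHom.commutes, AlgHom.commutes, ha₂',
    Polynomial.algebraMap_eq]
  have hmod := Polynomial.modByMonic_add_div f ((X:k[X])^2+1)
  linear_combination hmod - hr

open Polynomial in
lemma eval_pm {k : Type*} [Field k] (a : C k) {i : k} (hi : i^2 = -1) :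
    (αC k a).eval i = (αC k a).eval (-i) := by
  obtain ⟨q, rfl⟩ := Ideal.Quotient.mk_surjective a
  rw [αC_mk, eval_fC, eval_fC]
  have e : ![-i^2-1, -i^3-i] = ![-(-i)^2-1, -(-i)^3-(-i)] := by
    funext j
    fin_cases j
    · show -i^2-1 = -(-i)^2-1; ring
    · show -i^3-i = -(-i)^3-(-i); linear_combination (-2*i)*hi
  rw [e]
open Polynomial in
/-- The surjective `C`-linear map `C² → C' = k[t]`, `(a,b) ↦ α(a) − α(b)·t`, has kernel
isomorphic to `C'` as a `C`-module; hence there is a short exact sequence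
`0 → C' → C² → C' → 0`. -/
theorem stmt8 (k : Type*) [Field k] [IsAlgClosed k] [CharZero k] :
    Function.Surjective (gC k) ∧
    Nonempty (LinearMap.ker (gC k) ≃ₗ[C k] Polynomial k) := by
  classical
  refine ⟨gC_surj, ?_⟩
  obtain ⟨i, hi⟩ := IsAlgClosed.exists_pow_nat_eq (-1 : k) (n := 2) (by norm_num)
  have hi0 : i ≠ 0 := fun h0 => by rw [h0] at hi; norm_num at hi
  have exb : ∀ h : k[X], ∃ b : C k, αC k b = ((X:k[X])^2+1) * h := fun h => mul_mem_range h
  have exa : ∀ h : k[X], ∃ a : C k, αC k a = X * (((X:k[X])^2+1) * h) := fun h => by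
    obtain ⟨a, ha⟩ := mul_mem_range ((X:k[X]) * h)
    exact ⟨a, by rw [show αC k a = ((X:k[X])^2+1) * (X * h) from ha]; ring⟩
  choose Fa hFa using exa
  choose Fb hFb using exb
  have hker : ∀ h, (Fa h, Fb h) ∈ LinearMap.ker (gC k) := fun h => by
    rw [LinearMap.mem_ker, gC_apply, hFa, hFb]; ring
  let L : k[X] →ₗ[C k] LinearMap.ker (gC k) :=
    { toFun := fun h => ⟨(Fa h, Fb h), hker h⟩
      map_add' := fun h h' => by
        apply Subtype.ext
        have e1 : Fa (h + h') = Fa h + Fa h' := αC_inj (by rw [map_add, hFa, hFa, hFa]; ring)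
        have e2 : Fb (h + h') = Fb h + Fb h' := αC_inj (by rw [map_add, hFb, hFb, hFb]; ring)
        show (Fa (h + h'), Fb (h + h')) = (Fa h + Fa h', Fb h + Fb h')
        rw [e1, e2]
      map_smul' := fun c h => by
        apply Subtype.ext
        have e1 : Fa (c • h) = c * Fa h :=
          αC_inj (by rw [map_mul, hFa, hFa, smul_def']; ring)
        have e2 : Fb (c • h) = c * Fb h :=
          αC_inj (by rw [map_mul, hFb, hFb, smul_def']; ring)
        show (Fa (c • h), Fb (c • h)) = (c * Fa h, c * Fb h)
        rw [e1, e2] }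
  have Linj : Function.Injective L := by
    intro h h' he
    have hb : Fb h = Fb h' := congrArg (fun x => x.1.2) he
    have := congrArg (αC k) hb
    rw [hFb, hFb] at this
    exact mul_left_cancel₀ X2_ne_zero this
  have Lsurj : Function.Surjective L := by
    rintro ⟨⟨a, b⟩, hab⟩
    rw [LinearMap.mem_ker, gC_apply, sub_eq_zero] at hab
    have hpm_b := eval_pm b hi
    have hpm_a := eval_pm a hi
    set c := (αC k b).eval i with hc
    have h1 : (αC k a).eval i = c * i := by rw [hab]; simp; exact Or.inl hc.symm
    have h2 : (αC k a).eval (-i) = c * (-i) := by rw [hab]; simp [← hpm_b]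
    have hc0 : c = 0 := by
      have hcc : c * i = c * (-i) := by rw [← h1, ← h2, hpm_a]
      have h2ci : (2 : k) * (c * i) = 0 := by linear_combination hcc
      rcases mul_eq_zero.mp h2ci with h' | h'
      · exact absurd h' two_ne_zero
      · rcases mul_eq_zero.mp h' with h'' | h''
        · exact h''
        · exact absurd h'' hi0
    have hroot1 : (X - Polynomial.C i) ∣ αC k b := dvd_iff_isRoot.mpr hc0
    have hroot2 : (X - Polynomial.C (-i)) ∣ αC k b :=
      dvd_iff_isRoot.mpr (by show (αC k b).eval (-i) = 0; rw [← hpm_b]; exact hc0)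
    have hcop : IsCoprime (X - Polynomial.C i) (X - Polynomial.C (-i)) := by
      apply Polynomial.isCoprime_X_sub_C_of_isUnit_sub
      have : i - -i = 2 * i := by ring
      rw [this]
      exact (mul_ne_zero two_ne_zero hi0).isUnit
    have hdvd := hcop.mul_dvd hroot1 hroot2
    have heq : (X - Polynomial.C i) * (X - Polynomial.C (-i)) = (X:k[X])^2 + 1 := by
      have hC : (Polynomial.C i) * (Polynomial.C i) = (-1 : k[X]) := by
        rw [← Polynomial.C_mul, show i * i = -1 by linear_combination hi, map_neg, map_one]
      rw [map_neg]
      linear_combination -hC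
    rw [heq] at hdvd
    obtain ⟨h, hh⟩ := hdvd
    have eb : b = Fb h := αC_inj (by rw [hFb, hh])
    have ea : a = Fa h := αC_inj (by rw [hFa, hab, hh]; ring)
    exact ⟨h, Subtype.ext (by show (Fa h, Fb h) = (a, b); rw [ea, eb])⟩
  exact ⟨(LinearEquiv.ofBijective L ⟨Linj, Lsurj⟩).symm⟩

end
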